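/- Let (X, d, μ) be a separable metric probability space. A point u ∈ X satisfies: there exists a null sequence (r_n) with liminf_{n→∞} μ(B(u,r_n))/M_{r_n} ≥ 1 (i.e. u is a partial strong mode), if and only if for every sequence u_n → u there exists a null sequence (r_n) with liminf_{n→∞} μ(B(u_n,r_n))/M_{r_n} ≥ 1. -/

import Mathlib

open MeasureTheory Metric Filter Topology

/-- Ball-mass ratio with the conventions `c/0 = ∞` for `c > 0` and `0/0 = 1`. -/
noncomputable def mRatio (a b : ENNReal) : ENNReal :=
  if b = 0 then (if a = 0 then 1 else ⊤) else a / b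

lemma supBall_ne_zero {X : Type*} [MetricSpace X] [TopologicalSpace.SeparableSpace X]
    [MeasurableSpace X] [BorelSpace X] (μ : Measure X) [IsProbabilityMeasure μ]
    {ρ : ℝ} (hρ : 0 < ρ) : (⨆ x : X, μ (ball x ρ)) ≠ 0 := by
  intro h0
  obtain ⟨D, hDc, hDd⟩ := TopologicalSpace.exists_countable_dense X
  have hcov : (Set.univ : Set X) ⊆ ⋃ x ∈ D, ball x ρ := by
    intro y _
    obtain ⟨b, hbD, hb⟩ := Metric.mem_closure_iff.mp (hDd y) ρ hρ
    exact Set.mem_biUnion hbD (by simpa [mem_ball] using hb)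
  have h1 : (1 : ENNReal) ≤ 0 := by
    calc (1 : ENNReal) = μ Set.univ := measure_univ.symm
      _ ≤ μ (⋃ x ∈ D, ball x ρ) := measure_mono hcov
      _ ≤ ∑' x : D, μ (ball (x : X) ρ) := measure_biUnion_le μ hDc _
      _ = 0 := by
          have hz : ∀ x : D, μ (ball (x : X) ρ) = 0 := fun x =>
            le_antisymm (h0 ▸ le_iSup (fun z : X => μ (ball z ρ)) (x : X)) (zero_le)
          simp [hz]
  simp at h1

lemma supBall_ne_top {X : Type*} [MetricSpace X]
    [MeasurableSpace X] (μ : Measure X) [IsProbabilityMeasure μ]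
    (ρ : ℝ) : (⨆ x : X, μ (ball x ρ)) ≠ ⊤ :=
  ne_top_of_le_ne_top ENNReal.one_ne_top (iSup_le fun _ => prob_le_one)

lemma key_lemma {X : Type*} [MetricSpace X] [TopologicalSpace.SeparableSpace X]
    [MeasurableSpace X] [BorelSpace X] (μ : Measure X) [IsProbabilityMeasure μ]
    (u : X)
    (h : ∃ r : ℕ → ℝ, (∀ n, 0 < r n) ∧ Tendsto r atTop (𝓝 0) ∧
        1 ≤ Filter.liminf
          (fun n => mRatio (μ (ball u (r n))) (⨆ x : X, μ (ball x (r n)))) atTop)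
    {c : ENNReal} (hc : c < 1) {δ : ℝ} (hδ : 0 < δ) :
    ∃ ρ ρ' : ℝ, 0 < ρ ∧ ρ ≤ δ ∧ ρ' < ρ ∧
      c * (⨆ x : X, μ (ball x ρ)) ≤ μ (ball u ρ') := by
  obtain ⟨r, hrpos, hr0, hlim⟩ := h
  have h1 : ∀ᶠ n in atTop,
      c < mRatio (μ (ball u (r n))) (⨆ x : X, μ (ball x (r n))) :=
    eventually_lt_of_lt_liminf (lt_of_lt_of_le hc hlim)
  have h2 : ∀ᶠ n in atTop, r n < δ := hr0.eventually (gt_mem_nhds hδ)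
  obtain ⟨n, hn1, hn2⟩ := (h1.and h2).exists
  set ρ := r n with hρdef
  have hb0 : (⨆ x : X, μ (ball x ρ)) ≠ 0 := supBall_ne_zero μ (hrpos n)
  have hbt : (⨆ x : X, μ (ball x ρ)) ≠ ⊤ := supBall_ne_top μ ρ
  rw [mRatio, if_neg hb0] at hn1
  have hmul : c * (⨆ x : X, μ (ball x ρ)) < μ (ball u ρ) :=
    (ENNReal.lt_div_iff_mul_lt (Or.inl hb0) (Or.inl hbt)).mp hn1
  have hunion : ball u ρ = ⋃ k : ℕ, ball u (ρ - 1 / (k + 1)) := by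
    ext y
    simp only [Set.mem_iUnion, mem_ball]
    constructor
    · intro hy
      obtain ⟨k, hk⟩ := exists_nat_one_div_lt (sub_pos.mpr hy)
      exact ⟨k, by linarith⟩
    · rintro ⟨k, hk⟩
      have hpos : (0 : ℝ) < 1 / ((k : ℝ) + 1) := by positivity
      linarith
  have hmono : Monotone (fun k : ℕ => ball u (ρ - 1 / (k + 1))) := by
    intro a b hab
    apply ball_subset_ball
    have hle : (1 : ℝ) / ((b : ℝ) + 1) ≤ 1 / ((a : ℝ) + 1) := by
      gcongr <;> exact_mod_cast hab
    linarith
  rw [hunion, hmono.directed_le.measure_iUnion] at hmul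
  obtain ⟨k, hk⟩ := lt_iSup_iff.mp hmul
  refine ⟨ρ, ρ - 1 / (k + 1), hrpos n, hn2.le, ?_, hk.le⟩
  have hpos : (0 : ℝ) < 1 / ((k : ℝ) + 1) := by positivity
  linarith

theorem stmt7 {X : Type*} [MetricSpace X] [TopologicalSpace.SeparableSpace X]
    [MeasurableSpace X] [BorelSpace X] (μ : Measure X) [IsProbabilityMeasure μ]
    (u : X) :
    (∃ r : ℕ → ℝ, (∀ n, 0 < r n) ∧ Tendsto r atTop (𝓝 0) ∧
        1 ≤ Filter.liminf
          (fun n => mRatio (μ (ball u (r n))) (⨆ x : X, μ (ball x (r n)))) atTop)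
    ↔ ∀ us : ℕ → X, Tendsto us atTop (𝓝 u) →
        ∃ r : ℕ → ℝ, (∀ n, 0 < r n) ∧ Tendsto r atTop (𝓝 0) ∧
          1 ≤ Filter.liminf
            (fun n => mRatio (μ (ball (us n) (r n))) (⨆ x : X, μ (ball x (r n)))) atTop := by
  constructor
  · intro h us hus
    classical
    have key' : ∀ k : ℕ, ∃ ρ ρ' : ℝ, 0 < ρ ∧ ρ ≤ 1 / ((k : ℝ) + 1) ∧ ρ' < ρ ∧
        (1 - ((k : ENNReal) + 1)⁻¹) * (⨆ x : X, μ (ball x ρ)) ≤ μ (ball u ρ') := by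
      intro k
      refine key_lemma μ u h ?_ (by positivity)
      exact ENNReal.sub_lt_self ENNReal.one_ne_top one_ne_zero
        (by simp)
    choose ρ ρ' hρpos hρle hρ'lt hineq using key'
    set P : ℕ → ℕ → Prop := fun m k => ∀ j ≤ k, dist (us m) u < ρ j - ρ' j with hPdef
    set K : ℕ → ℕ := fun m => Nat.findGreatest (P m) m with hKdef
    have hdist0 : Tendsto (fun m => dist (us m) u) atTop (𝓝 0) :=
      tendsto_iff_dist_tendsto_zero.mp hus
    have hKge : ∀ k : ℕ, ∀ᶠ m in atTop, k ≤ K m := by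
      intro k
      have h1 : ∀ᶠ m in atTop, ∀ j ∈ Finset.range (k + 1),
          dist (us m) u < ρ j - ρ' j := by
        rw [eventually_all_finset]
        intro j _
        exact hdist0.eventually (gt_mem_nhds (sub_pos.mpr (hρ'lt j)))
      filter_upwards [h1, eventually_ge_atTop k] with m hm hmk
      exact Nat.le_findGreatest hmk
        (fun j hj => hm j (Finset.mem_range.mpr (Nat.lt_succ_of_le hj)))
    have hKtop : Tendsto K atTop atTop := tendsto_atTop.mpr hKge
    refine ⟨fun m => ρ (K m), fun m => hρpos _, ?_, ?_⟩
    · refine squeeze_zero (fun m => (hρpos _).le)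
        (fun m => hρle (K m)) ?_
      exact tendsto_one_div_add_atTop_nhds_zero_nat.comp hKtop
    · have hck : ∀ k : ℕ, (1 - ((k : ENNReal) + 1)⁻¹) ≤
          Filter.liminf (fun m =>
            mRatio (μ (ball (us m) (ρ (K m)))) (⨆ x : X, μ (ball x (ρ (K m))))) atTop := by
        intro k
        refine le_liminf_of_le (by isBoundedDefault) ?_
        have ev0 : ∀ᶠ m in atTop, P m 0 := by
          have := hdist0.eventually (gt_mem_nhds (sub_pos.mpr (hρ'lt 0)))
          filter_upwards [this] with m hm j hj
          rw [Nat.le_zero.mp hj]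
          exact hm
        filter_upwards [hKge k, ev0] with m hmk hm0
        have hPK : P m (K m) := Nat.findGreatest_spec (Nat.zero_le m) hm0
        set j := K m with hj
        have hdist : dist (us m) u < ρ j - ρ' j := hPK j le_rfl
        have hsub : ball u (ρ' j) ⊆ ball (us m) (ρ j) := by
          intro y hy
          rw [mem_ball] at hy ⊢
          have h3 := dist_triangle y u (us m)
          have h4 : dist u (us m) = dist (us m) u := dist_comm _ _
          linarith
        have hb0 : (⨆ x : X, μ (ball x (ρ j))) ≠ 0 := supBall_ne_zero μ (hρpos j)
        have hbt : (⨆ x : X, μ (ball x (ρ j))) ≠ ⊤ := supBall_ne_top μ _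
        have hμle : (1 - ((j : ENNReal) + 1)⁻¹) * (⨆ x : X, μ (ball x (ρ j)))
            ≤ μ (ball (us m) (ρ j)) := (hineq j).trans (measure_mono hsub)
        have hcj : (1 - ((k : ENNReal) + 1)⁻¹) ≤ (1 - ((j : ENNReal) + 1)⁻¹) := by
          gcongr <;> exact_mod_cast hmk
        rw [mRatio, if_neg hb0]
        exact (ENNReal.le_div_iff_mul_le (Or.inl hb0) (Or.inl hbt)).mpr
          ((mul_le_mul_left hcj _).trans hμle)
      refine le_of_forall_lt_imp_le_of_dense ?_
      intro c hc
      have hpos : (1 : ENNReal) - c ≠ 0 := by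
        rw [← pos_iff_ne_zero, tsub_pos_iff_lt]
        exact hc
      obtain ⟨n, hn⟩ := ENNReal.exists_inv_nat_lt hpos
      refine le_trans ?_ (hck n)
      have hle : ((n : ENNReal) + 1)⁻¹ ≤ (n : ENNReal)⁻¹ := by
        gcongr <;> exact le_add_of_nonneg_right zero_le_one
      have hadd : c + ((n : ENNReal) + 1)⁻¹ ≤ 1 := by
        calc c + ((n : ENNReal) + 1)⁻¹ ≤ c + (1 - c) :=
              add_le_add_right (hle.trans hn.le) c
          _ = 1 := add_tsub_cancel_of_le hc.le
      exact ENNReal.le_sub_of_add_le_right (by simp) hadd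
  · intro h
    exact h (fun _ => u) tendsto_const_nhds
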